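/- Let n ≥ 2 and let 𝓕 = (F_1, …, F_ℓ) be a finite sequence of simple graphs, each with exactly n − 1 vertices. Then there exist a finite set S of finite sequences of simple graphs, each graph in each sequence having exactly n − 1 vertices, and real coefficients β : S → ℝ, such that for every n-vertex simple graph G, c*(𝓕, G) = Σ_{𝓕' ∈ S} β(𝓕') · c(𝓕', G). That is, the function G ↦ c*(𝓕, G) on n-vertex graphs is a fixed real linear combination of the covering-number functions G ↦ c(𝓕', G). -/

import Mathlib

open SimpleGraph

/-- The vertex-deleted subgraph `G − v`: the induced subgraph of `G` obtained by
deleting `v` and all edges incident with `v`. -/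
abbrev vdel {n : ℕ} (G : SimpleGraph (Fin n)) (v : Fin n) :
    SimpleGraph ({v}ᶜ : Set (Fin n)) :=
  G.induce {v}ᶜ

/-- `H` is a reconstruction of `G`: there is a bijection `f` between the vertex
sets such that `G − v ≅ H − f v` for every vertex `v`. -/
def IsReconstruction {n : ℕ} (G H : SimpleGraph (Fin n)) : Prop :=
  ∃ f : Fin n ≃ Fin n, ∀ v : Fin n, Nonempty (vdel G v ≃g vdel H (f v))

/-- `s(F,G)`: the number of subgraphs of `G` isomorphic to `F`. -/
noncomputable def subCount {k n : ℕ} (F : SimpleGraph (Fin k))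
    (G : SimpleGraph (Fin n)) : ℕ :=
  Nat.card {H : G.Subgraph // Nonempty (F ≃g H.coe)}

/-- A finite sequence of simple graphs (on arbitrary finite vertex sets). -/
abbrev GSeq : Type := List (Σ k : ℕ, SimpleGraph (Fin k))

/-- `c(𝓕,G)`: the number of covers of `G` by the sequence `L`, i.e. of sequences
of subgraphs of `G`, the `i`-th being isomorphic to the `i`-th graph of `L`,
whose union (of both vertex sets and edge sets) is all of `G`. -/
noncomputable def coverCount {n : ℕ} (L : GSeq) (G : SimpleGraph (Fin n)) : ℕ :=
  Nat.card {C : Fin L.length → G.Subgraph //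
    (∀ i, Nonempty ((L.get i).2 ≃g (C i).coe)) ∧ (⨆ i, C i) = ⊤}

/-- `c*(𝓕,G)`: the number of non-overlapping covers of `G` by the sequence `L`,
i.e. covers whose members have pairwise distinct vertex sets. -/
noncomputable def coverCountNO {n : ℕ} (L : GSeq) (G : SimpleGraph (Fin n)) : ℕ :=
  Nat.card {C : Fin L.length → G.Subgraph //
    (∀ i, Nonempty ((L.get i).2 ≃g (C i).coe)) ∧ (⨆ i, C i) = ⊤ ∧
    Function.Injective fun i => (C i).verts}

open scoped Classical

instance sgFinite {V : Type*} [Finite V] {G : SimpleGraph V} : Finite G.Subgraph := by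
  have : Function.Injective (fun H : G.Subgraph => (H.verts, H.Adj)) := by
    intro a b h
    simp only [Prod.mk.injEq] at h
    exact SimpleGraph.Subgraph.ext h.1 h.2
  exact Finite.of_injective _ this

/-- transport a spanning-type subgraph's coercion along an injective hom -/
noncomputable def isoMapInj {V W : Type*} {X : SimpleGraph V} {Y : SimpleGraph W} (f : X →g Y)
    (hf : Function.Injective f) (A : X.Subgraph) : A.coe ≃g (A.map f).coe where
  toEquiv := Equiv.Set.image f A.verts hf
  map_rel_iff' := by
    intro a b
    simp only [Equiv.Set.image_apply, SimpleGraph.Subgraph.coe_adj, SimpleGraph.Subgraph.map_adj]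
    constructor
    · rintro ⟨u, v, h, hu, hv⟩
      rwa [hf hu, hf hv] at h
    · intro h; exact ⟨a, b, h, rfl, rfl⟩

lemma hom_symm_comp {V W : Type*} {X : SimpleGraph V} {Y : SimpleGraph W} (e : X ≃g Y) :
    e.symm.toHom.comp e.toHom = SimpleGraph.Hom.id := by
  ext a
  simp

lemma map_symm_map {V W : Type*} {X : SimpleGraph V} {Y : SimpleGraph W} (e : X ≃g Y)
    (A : X.Subgraph) : (A.map e.toHom).map e.symm.toHom = A := by
  rw [← SimpleGraph.Subgraph.map_comp, hom_symm_comp, SimpleGraph.Subgraph.map_id]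

/-- Subgraph lattices of isomorphic graphs are equivalent. -/
def mapEquiv {V W : Type*} {X : SimpleGraph V} {Y : SimpleGraph W} (e : X ≃g Y) :
    X.Subgraph ≃ Y.Subgraph where
  toFun := SimpleGraph.Subgraph.map e.toHom
  invFun := SimpleGraph.Subgraph.map e.symm.toHom
  left_inv := map_symm_map e
  right_inv := by
    intro A
    have := map_symm_map e.symm A
    simpa using this
  
lemma map_top_iso {V W : Type*} {X : SimpleGraph V} {Y : SimpleGraph W} (e : X ≃g Y) :
    (⊤ : X.Subgraph).map e.toHom = ⊤ := by
  ext v w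
  · simp only [SimpleGraph.Subgraph.map_verts, SimpleGraph.Subgraph.verts_top, Set.image_univ,
      Set.mem_range, Set.mem_univ, iff_true]
    exact ⟨e.symm v, by simp⟩
  · simp only [SimpleGraph.Subgraph.map_adj, SimpleGraph.Subgraph.top_adj, Relation.Map]
    constructor
    · rintro ⟨a, b, h, rfl, rfl⟩
      exact e.map_adj_iff.mpr h
    · intro h
      exact ⟨e.symm v, e.symm w, e.symm.map_adj_iff.mpr h, by simp, by simp⟩

/-- splittings of a subgraph `H` into two spanning parts isomorphic to `F₁`, `F₂`. -/
abbrev spSet {V : Type*} {G : SimpleGraph V} (H : G.Subgraph) {α β : Type*}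
    (F₁ : SimpleGraph α) (F₂ : SimpleGraph β) : Type _ :=
  {p : G.Subgraph × G.Subgraph // p.1 ⊔ p.2 = H ∧ p.1.verts = p.2.verts ∧
    Nonempty (F₁ ≃g p.1.coe) ∧ Nonempty (F₂ ≃g p.2.coe)}

def isoOfSubgraphEq {V : Type*} {G : SimpleGraph V} {A B : G.Subgraph} (h : A = B) :
    A.coe ≃g B.coe := by subst h; exact RelIso.refl _

lemma verts_eq_of_sup {V : Type*} {G : SimpleGraph V} {H A B : G.Subgraph}
    (hs : A ⊔ B = H) (hv : A.verts = B.verts) : A.verts = H.verts := by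
  rw [← hs, SimpleGraph.Subgraph.verts_sup, ← hv, Set.union_self]

lemma coeSubgraph_top {V : Type*} {G : SimpleGraph V} (H : G.Subgraph) :
    SimpleGraph.Subgraph.coeSubgraph (⊤ : H.coe.Subgraph) = H := by
  ext v w
  · simp [SimpleGraph.Subgraph.verts_coeSubgraph]
  · rw [SimpleGraph.Subgraph.coeSubgraph_adj]
    simp only [SimpleGraph.Subgraph.top_adj, SimpleGraph.Subgraph.coe_adj]
    constructor
    · rintro ⟨hv, hw, h⟩; exact h
    · intro h; exact ⟨H.edge_vert h, H.edge_vert h.symm, h⟩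

lemma coeSubgraph_sup {V : Type*} {G : SimpleGraph V} {H : G.Subgraph}
    (A B : H.coe.Subgraph) :
    SimpleGraph.Subgraph.coeSubgraph (A ⊔ B) =
      SimpleGraph.Subgraph.coeSubgraph A ⊔ SimpleGraph.Subgraph.coeSubgraph B :=
  SimpleGraph.Subgraph.map_sup _ _ _

noncomputable def spSetRestrict {V α β : Type*} {G : SimpleGraph V} (H : G.Subgraph)
    (F₁ : SimpleGraph α) (F₂ : SimpleGraph β) :
    spSet (⊤ : H.coe.Subgraph) F₁ F₂ ≃ spSet H F₁ F₂ where
  toFun q :=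
    ⟨(SimpleGraph.Subgraph.coeSubgraph q.1.1, SimpleGraph.Subgraph.coeSubgraph q.1.2), by
      obtain ⟨hs, hv, h1, h2⟩ := q.2
      refine ⟨?_, ?_, ⟨h1.some.trans (isoMapInj H.hom Subtype.val_injective _)⟩,
        ⟨h2.some.trans (isoMapInj H.hom Subtype.val_injective _)⟩⟩
      · rw [← coeSubgraph_sup, hs, coeSubgraph_top]
      · simp only [SimpleGraph.Subgraph.verts_coeSubgraph, hv]⟩
  invFun p :=
    ⟨(H.restrict p.1.1, H.restrict p.1.2), by
      obtain ⟨hs, hv, h1, h2⟩ := p.2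
      have hle1 : p.1.1 ≤ H := le_sup_left.trans hs.le
      have hle2 : p.1.2 ≤ H := le_sup_right.trans hs.le
      have hcr1 : SimpleGraph.Subgraph.coeSubgraph (H.restrict p.1.1) = p.1.1 := by
        rw [SimpleGraph.Subgraph.coeSubgraph_restrict_eq, inf_eq_right.mpr hle1]
      have hcr2 : SimpleGraph.Subgraph.coeSubgraph (H.restrict p.1.2) = p.1.2 := by
        rw [SimpleGraph.Subgraph.coeSubgraph_restrict_eq, inf_eq_right.mpr hle2]
      have i1 : (H.restrict p.1.1).coe ≃g p.1.1.coe :=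
        (isoMapInj H.hom Subtype.val_injective (H.restrict p.1.1)).trans (isoOfSubgraphEq hcr1)
      have i2 : (H.restrict p.1.2).coe ≃g p.1.2.coe :=
        (isoMapInj H.hom Subtype.val_injective (H.restrict p.1.2)).trans (isoOfSubgraphEq hcr2)
      refine ⟨?_, ?_, ⟨h1.some.trans i1.symm⟩, ⟨h2.some.trans i2.symm⟩⟩
      · apply SimpleGraph.Subgraph.coeSubgraph_injective H
        rw [coeSubgraph_sup, hcr1, hcr2, hs, coeSubgraph_top]
      · show Subtype.val ⁻¹' p.1.1.verts = Subtype.val ⁻¹' p.1.2.verts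
        rw [hv]⟩
  left_inv q := by
    apply Subtype.ext
    exact Prod.ext (SimpleGraph.Subgraph.restrict_coeSubgraph q.1.1)
      (SimpleGraph.Subgraph.restrict_coeSubgraph q.1.2)
  right_inv := by
    rintro ⟨⟨p1, p2⟩, hs, hv, h1, h2⟩
    have hle1 : p1 ≤ H := le_sup_left.trans hs.le
    have hle2 : p2 ≤ H := le_sup_right.trans hs.le
    apply Subtype.ext
    dsimp only
    rw [SimpleGraph.Subgraph.coeSubgraph_restrict_eq,
      SimpleGraph.Subgraph.coeSubgraph_restrict_eq,
      inf_eq_right.mpr hle1, inf_eq_right.mpr hle2]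

/-- transporting splittings along an isomorphism of ambient graphs -/
noncomputable def spMapEquiv {V W α β : Type*} {X : SimpleGraph V} {Y : SimpleGraph W}
    (e : X ≃g Y) (F₁ : SimpleGraph α) (F₂ : SimpleGraph β) :
    spSet (⊤ : X.Subgraph) F₁ F₂ ≃ spSet (⊤ : Y.Subgraph) F₁ F₂ := by
  refine Equiv.subtypeEquiv (Equiv.prodCongr (mapEquiv e) (mapEquiv e)) ?_
  intro p
  have hinj : Function.Injective (⇑e.toHom) := e.toEquiv.injective
  constructor
  · rintro ⟨hs, hv, h1, h2⟩
    refine ⟨?_, ?_, ⟨h1.some.trans (isoMapInj e.toHom hinj p.1)⟩,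
      ⟨h2.some.trans (isoMapInj e.toHom hinj p.2)⟩⟩
    · show p.1.map e.toHom ⊔ p.2.map e.toHom = ⊤
      rw [← SimpleGraph.Subgraph.map_sup, hs, map_top_iso]
    · show (p.1.map e.toHom).verts = (p.2.map e.toHom).verts
      simp only [SimpleGraph.Subgraph.map_verts, hv]
  · rintro ⟨hs, hv, h1, h2⟩
    have hs' : p.1.map e.toHom ⊔ p.2.map e.toHom = ⊤ := hs
    have hinj2 : Function.Injective (SimpleGraph.Subgraph.map e.toHom) :=
      (mapEquiv e).injective
    refine ⟨?_, ?_, ⟨h1.some.trans (isoMapInj e.toHom hinj p.1).symm⟩,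
      ⟨h2.some.trans (isoMapInj e.toHom hinj p.2).symm⟩⟩
    · apply hinj2
      rw [SimpleGraph.Subgraph.map_sup, map_top_iso, hs']
    · have : (p.1.map e.toHom).verts = (p.2.map e.toHom).verts := hv
      simp only [SimpleGraph.Subgraph.map_verts] at this
      exact Set.image_injective.mpr hinj this

lemma card_spSet {V V' α β : Type*} {G : SimpleGraph V} {X : SimpleGraph V'}
    (H : G.Subgraph) (e : H.coe ≃g X) (F₁ : SimpleGraph α) (F₂ : SimpleGraph β) :
    Nat.card (spSet H F₁ F₂) = Nat.card (spSet (⊤ : X.Subgraph) F₁ F₂) :=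
  Nat.card_congr ((spSetRestrict H F₁ F₂).symm.trans (spMapEquiv e F₁ F₂))

lemma nat_card_sigma {β : Type*} [Fintype β] (g : β → Type*) [∀ b, Finite (g b)] :
    Nat.card (Σ b, g b) = ∑ b, Nat.card (g b) := by
  letI : ∀ b, Fintype (g b) := fun b => Fintype.ofFinite (g b)
  rw [Nat.card_eq_fintype_card, Fintype.card_sigma]
  exact Finset.sum_congr rfl fun b _ => (Nat.card_eq_fintype_card).symm

section Main
variable {n k : ℕ}

/-- the defining property of a cover which is non-overlapping on the first `m` indices -/
def covP {ℓ : ℕ} (F : Fin ℓ → SimpleGraph (Fin k)) {G : SimpleGraph (Fin n)} (m : ℕ)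
    (C : Fin ℓ → G.Subgraph) : Prop :=
  (∀ i, Nonempty (F i ≃g (C i).coe)) ∧ (⨆ i, C i) = ⊤ ∧
    (∀ a b : Fin ℓ, (a : ℕ) < m → (b : ℕ) < m → (C a).verts = (C b).verts → a = b)

abbrev coversAux {ℓ : ℕ} (F : Fin ℓ → SimpleGraph (Fin k)) (m : ℕ) (G : SimpleGraph (Fin n)) :
    Type _ := {C : Fin ℓ → G.Subgraph // covP F m C}

noncomputable def cAux {ℓ : ℕ} (F : Fin ℓ → SimpleGraph (Fin k)) (m : ℕ)
    (G : SimpleGraph (Fin n)) : ℕ := Nat.card (coversAux F m G)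

abbrev colSet {ℓ : ℕ} (F : Fin ℓ → SimpleGraph (Fin k)) (j m : Fin ℓ)
    (G : SimpleGraph (Fin n)) : Type _ :=
  {C : Fin ℓ → G.Subgraph // covP F m.1 C ∧ (C m).verts = (C j).verts}

abbrev colSetW {ℓ : ℕ} (F : Fin ℓ → SimpleGraph (Fin k)) (j m : Fin ℓ)
    (W : SimpleGraph (Fin k)) (G : SimpleGraph (Fin n)) : Type _ :=
  {C : Fin ℓ → G.Subgraph // (covP F m.1 C ∧ (C m).verts = (C j).verts) ∧
    Nonempty ((C j ⊔ C m).coe ≃g W)}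

lemma lemma1 {ℓ : ℕ} (F : Fin ℓ → SimpleGraph (Fin k)) (G : SimpleGraph (Fin n))
    (m : Fin ℓ) :
    cAux F m.1 G = cAux F (m.1 + 1) G +
      ∑ j : Fin ℓ, if (j : ℕ) < (m : ℕ) then Nat.card (colSet F j m G) else 0 := by
  classical
  set Q : (Fin ℓ → G.Subgraph) → Prop :=
    fun C => ∀ a b : Fin ℓ, (a : ℕ) < m.1 + 1 → (b : ℕ) < m.1 + 1 →
      (C a).verts = (C b).verts → a = b with hQ
  have hsplit : cAux F m.1 G = Nat.card {x : coversAux F m.1 G // Q x.1} +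
      Nat.card {x : coversAux F m.1 G // ¬ Q x.1} := by
    rw [cAux, ← Nat.card_sum]
    exact Nat.card_congr (Equiv.sumCompl (fun x : coversAux F m.1 G => Q x.1)).symm
  have h1 : Nat.card {x : coversAux F m.1 G // Q x.1} = cAux F (m.1 + 1) G := by
    apply Nat.card_congr
    refine Equiv.trans (Equiv.subtypeSubtypeEquivSubtypeInter _ _) (Equiv.subtypeEquivRight ?_)
    rintro C
    constructor
    · rintro ⟨⟨hbase, htop, _⟩, hinj⟩
      exact ⟨hbase, htop, hinj⟩
    · rintro ⟨hbase, htop, hinj⟩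
      exact ⟨⟨hbase, htop, fun a b ha hb hv =>
        hinj a b (Nat.lt_succ_of_lt ha) (Nat.lt_succ_of_lt hb) hv⟩, hinj⟩
  have hex : ∀ x : coversAux F m.1 G, ¬ Q x.1 →
      ∃ j : Fin ℓ, (j : ℕ) < m.1 ∧ (x.1 m).verts = (x.1 j).verts := by
    intro x hx
    simp only [hQ] at hx
    push_neg at hx
    obtain ⟨a, b, ha, hb, hv, hab⟩ := hx
    rcases Nat.lt_succ_iff_lt_or_eq.mp ha with ha' | ha'
    · rcases Nat.lt_succ_iff_lt_or_eq.mp hb with hb' | hb'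
      · exact absurd (x.2.2.2 a b ha' hb' hv) hab
      · have hbm : b = m := Fin.ext hb'
        rw [hbm] at hv
        exact ⟨a, ha', hv.symm⟩
    · have ham : a = m := Fin.ext ha'
      have hb' : (b : ℕ) < m.1 := by
        rcases Nat.lt_succ_iff_lt_or_eq.mp hb with h | h
        · exact h
        · exact absurd (ham.trans (Fin.ext h).symm) hab
      rw [ham] at hv
      exact ⟨b, hb', hv⟩
  set jOf : {x : coversAux F m.1 G // ¬ Q x.1} → Fin ℓ :=
    fun x => Classical.choose (hex x.1 x.2) with hjOf
  have hjOf_spec : ∀ x : {x : coversAux F m.1 G // ¬ Q x.1},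
      (jOf x : ℕ) < m.1 ∧ (x.1.1 m).verts = (x.1.1 (jOf x)).verts :=
    fun x => Classical.choose_spec (hex x.1 x.2)
  have h2 : Nat.card {x : coversAux F m.1 G // ¬ Q x.1} =
      ∑ j : Fin ℓ, if (j : ℕ) < (m : ℕ) then Nat.card (colSet F j m G) else 0 := by
    rw [← Nat.card_congr (Equiv.sigmaFiberEquiv jOf), nat_card_sigma]
    refine Finset.sum_congr rfl fun j _ => ?_
    by_cases hj : (j : ℕ) < (m : ℕ)
    · rw [if_pos hj]
      apply Nat.card_congr
      have hnotQ : ∀ z : colSet F j m G, ¬ Q z.1 := by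
        intro z hPz
        have hmj : m = j := hPz m j (Nat.lt_succ_self _) (Nat.lt_succ_of_lt hj) z.2.2
        exact Fin.ne_of_val_ne (Nat.ne_of_lt hj) hmj.symm
      refine ⟨fun y => ⟨y.1.1.1, y.1.1.2, ?_⟩,
        fun z => ⟨⟨⟨z.1, z.2.1⟩, hnotQ z⟩, ?_⟩, fun y => ?_, fun z => ?_⟩
      · have := (hjOf_spec y.1).2
        rwa [y.2] at this
      · exact z.2.1.2.2 _ j (hjOf_spec ⟨⟨z.1, z.2.1⟩, hnotQ z⟩).1 hj
          ((hjOf_spec ⟨⟨z.1, z.2.1⟩, hnotQ z⟩).2.symm.trans z.2.2)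
      · apply Subtype.ext; apply Subtype.ext; rfl
      · apply Subtype.ext; rfl
    · rw [if_neg hj]
      rw [Nat.card_eq_zero]
      left
      rw [isEmpty_subtype]
      intro y
      intro h
      exact hj (h ▸ (hjOf_spec y).1)
  rw [hsplit, h1, h2]


section Cs
variable {k : ℕ}

/-- number of graphs on `Fin k` isomorphic to `W` -/
noncomputable def csCl (W : SimpleGraph (Fin k)) : ℕ :=
  Nat.card {W' : SimpleGraph (Fin k) // Nonempty (W' ≃g W)}

lemma csCl_pos (W : SimpleGraph (Fin k)) : 0 < csCl W := by
  have : Nonempty {W' : SimpleGraph (Fin k) // Nonempty (W' ≃g W)} :=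
    ⟨⟨W, ⟨RelIso.refl _⟩⟩⟩
  exact Nat.card_pos

lemma csCl_congr {W₁ W₂ : SimpleGraph (Fin k)} (h : Nonempty (W₁ ≃g W₂)) :
    csCl W₁ = csCl W₂ := by
  apply Nat.card_congr
  apply Equiv.subtypeEquivRight
  intro W'
  exact ⟨fun ⟨i⟩ => ⟨i.trans h.some⟩, fun ⟨i⟩ => ⟨i.trans h.some.symm⟩⟩

lemma existsRep {U : Type*} [Fintype U] (X : SimpleGraph U) (e : U ≃ Fin k) :
    ∃ W : SimpleGraph (Fin k), Nonempty (X ≃g W) :=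
  ⟨X.map e.toEmbedding, ⟨SimpleGraph.Iso.map e X⟩⟩

lemma sum_inv_csCl {U : Type*} (X : SimpleGraph U)
    (hex : ∃ W₀ : SimpleGraph (Fin k), Nonempty (X ≃g W₀)) :
    ∑ W : SimpleGraph (Fin k), (if Nonempty (X ≃g W) then ((csCl W : ℝ))⁻¹ else 0) = 1 := by
  classical
  obtain ⟨W₀, hW₀⟩ := hex
  have hcongr : ∀ W : SimpleGraph (Fin k), Nonempty (X ≃g W) → csCl W = csCl W₀ := by
    intro W hW
    exact csCl_congr ⟨hW.some.symm.trans hW₀.some⟩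
  have h1 : ∀ W : SimpleGraph (Fin k),
      (if Nonempty (X ≃g W) then ((csCl W : ℝ))⁻¹ else 0) =
      (if Nonempty (X ≃g W) then ((csCl W₀ : ℝ))⁻¹ else 0) := by
    intro W
    by_cases h : Nonempty (X ≃g W)
    · rw [if_pos h, if_pos h, hcongr W h]
    · rw [if_neg h, if_neg h]
  rw [Finset.sum_congr rfl (fun W _ => h1 W), ← Finset.sum_filter]
  have hcard : (Finset.univ.filter (fun W : SimpleGraph (Fin k) => Nonempty (X ≃g W))).card
      = csCl W₀ := by
    rw [csCl, Nat.card_eq_fintype_card, Fintype.card_subtype]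
    congr 1
    apply Finset.filter_congr
    intro W _
    exact ⟨fun ⟨i⟩ => ⟨i.symm.trans hW₀.some⟩, fun ⟨i⟩ => ⟨hW₀.some.trans i.symm⟩⟩
  rw [Finset.sum_const, hcard, nsmul_eq_mul]
  rw [mul_inv_cancel₀]
  exact_mod_cast (csCl_pos W₀).ne'

end Cs

section Main2
variable {n k : ℕ}

lemma lemma2 {ℓ : ℕ} (F : Fin ℓ → SimpleGraph (Fin k)) (G : SimpleGraph (Fin n))
    (j m : Fin ℓ) :
    (Nat.card (colSet F j m G) : ℝ) =
      ∑ W : SimpleGraph (Fin k), (Nat.card (colSetW F j m W G) : ℝ) / csCl W := by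
  classical
  letI : Fintype (colSet F j m G) := Fintype.ofFinite _
  have hone : ∀ x : colSet F j m G,
      (1 : ℝ) = ∑ W : SimpleGraph (Fin k),
        if Nonempty ((x.1 j ⊔ x.1 m).coe ≃g W) then ((csCl W : ℝ))⁻¹ else 0 := by
    intro x
    have hvu : (x.1 j ⊔ x.1 m).verts = (x.1 j).verts := by
      rw [SimpleGraph.Subgraph.verts_sup, x.2.2, Set.union_self]
    letI : Fintype ((x.1 j ⊔ x.1 m).verts : Set (Fin n)) := Fintype.ofFinite _
    have e : ((x.1 j ⊔ x.1 m).verts : Set (Fin n)) ≃ Fin k :=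
      (Equiv.setCongr hvu).trans (x.2.1.1 j).some.toEquiv.symm
    exact (sum_inv_csCl _ (existsRep _ e)).symm
  have hcard : (Nat.card (colSet F j m G) : ℝ) =
      ∑ x : colSet F j m G, (1 : ℝ) := by
    rw [Nat.card_eq_fintype_card]
    rw [Finset.sum_const, nsmul_eq_mul, mul_one]
    norm_num
  rw [hcard, Finset.sum_congr rfl (fun x _ => hone x), Finset.sum_comm]
  refine Finset.sum_congr rfl fun W _ => ?_
  rw [← Finset.sum_filter, Finset.sum_const, nsmul_eq_mul]
  have hc : (Finset.univ.filter
      (fun x : colSet F j m G => Nonempty ((x.1 j ⊔ x.1 m).coe ≃g W))).card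
      = Nat.card (colSetW F j m W G) := by
    letI : Fintype (colSetW F j m W G) := Fintype.ofFinite _
    rw [Nat.card_eq_fintype_card (α := colSetW F j m W G)]
    rw [← Fintype.card_subtype]
    exact Fintype.card_congr (Equiv.subtypeSubtypeEquivSubtypeInter
      (fun C : Fin ℓ → G.Subgraph => covP F m.1 C ∧ (C m).verts = (C j).verts)
      (fun C => Nonempty ((C j ⊔ C m).coe ≃g W)))
  rw [hc, div_eq_mul_inv]
end Main2

section Big
variable {n k : ℕ}

def mergedF {ℓ : ℕ} (F : Fin (ℓ+1) → SimpleGraph (Fin k)) (j m : Fin (ℓ+1))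
    (W : SimpleGraph (Fin k)) : Fin ℓ → SimpleGraph (Fin k) :=
  fun i => if m.succAbove i = j then W else F (m.succAbove i)

def mergeC {ℓ : ℕ} {G : SimpleGraph (Fin n)} (j m : Fin (ℓ+1))
    (C : Fin (ℓ+1) → G.Subgraph) : Fin ℓ → G.Subgraph :=
  fun i => if m.succAbove i = j then C j ⊔ C m else C (m.succAbove i)

def unmergeC {ℓ : ℕ} {G : SimpleGraph (Fin n)} (m : Fin (ℓ+1)) (j' : Fin ℓ)
    (D : Fin ℓ → G.Subgraph) (A B : G.Subgraph) : Fin (ℓ+1) → G.Subgraph :=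
  fun a => (finSuccEquiv' m a).elim B (fun i => if i = j' then A else D i)

variable {ℓ : ℕ} {G : SimpleGraph (Fin n)}

lemma unmergeC_at_m (m : Fin (ℓ+1)) (j' : Fin ℓ) (D : Fin ℓ → G.Subgraph) (A B : G.Subgraph) :
    unmergeC m j' D A B m = B := by
  simp [unmergeC, finSuccEquiv'_at]

lemma unmergeC_succAbove (m : Fin (ℓ+1)) (j' : Fin ℓ) (D : Fin ℓ → G.Subgraph)
    (A B : G.Subgraph) (i : Fin ℓ) :
    unmergeC m j' D A B (m.succAbove i) = if i = j' then A else D i := by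
  simp [unmergeC, finSuccEquiv'_succAbove]

lemma mergeC_at_j' {j m : Fin (ℓ+1)} {j' : Fin ℓ} (hj' : m.succAbove j' = j)
    (C : Fin (ℓ+1) → G.Subgraph) : mergeC j m C j' = C j ⊔ C m := by
  simp [mergeC, hj']

variable (F : Fin (ℓ+1) → SimpleGraph (Fin k)) {j m : Fin (ℓ+1)} {j' : Fin ℓ}
  (W : SimpleGraph (Fin k))

lemma lem_toFun (hj' : m.succAbove j' = j) (C : Fin (ℓ+1) → G.Subgraph)
    (hx : (covP F m.1 C ∧ (C m).verts = (C j).verts) ∧ Nonempty ((C j ⊔ C m).coe ≃g W)) :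
    covP (mergedF F j m W) m.1 (mergeC j m C) := by
  refine ⟨?_, ?_, ?_⟩
  · intro i
    by_cases h : m.succAbove i = j
    · have h1 : mergeC j m C i = C j ⊔ C m := by simp [mergeC, h]
      have h2 : mergedF F j m W i = W := by simp [mergedF, h]
      rw [h2]
      exact ⟨hx.2.some.symm.trans (isoOfSubgraphEq h1.symm)⟩
    · have h1 : mergeC j m C i = C (m.succAbove i) := by simp [mergeC, h]
      have h2 : mergedF F j m W i = F (m.succAbove i) := by simp [mergedF, h]
      rw [h2]
      exact ⟨(hx.1.1.1 (m.succAbove i)).some.trans (isoOfSubgraphEq h1.symm)⟩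
  · rw [eq_top_iff, ← hx.1.1.2.1]
    apply iSup_le
    intro a
    have h1 : C j ⊔ C m ≤ ⨆ i, mergeC j m C i := by
      rw [← mergeC_at_j' hj' C]; exact le_iSup _ j'
    rcases eq_or_ne a m with rfl | ham
    · exact le_sup_right.trans h1
    · obtain ⟨i, rfl⟩ := Fin.exists_succAbove_eq ham
      by_cases hij : m.succAbove i = j
      · rw [hij]
        exact le_sup_left.trans h1
      · have h2 : mergeC j m C i = C (m.succAbove i) := by simp [mergeC, hij]
        rw [← h2]
        exact le_iSup _ i
  · have hverts : ∀ i : Fin ℓ, (i : ℕ) < m.1 →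
        (mergeC j m C i).verts = (C (Fin.castSucc i)).verts := by
      intro i hi
      have hcs : m.succAbove i = Fin.castSucc i :=
        Fin.succAbove_of_castSucc_lt _ _ (by simpa [Fin.lt_def] using hi)
      simp only [mergeC, hcs]
      split_ifs with h
      · rw [SimpleGraph.Subgraph.verts_sup, hx.1.2, Set.union_self, h]
      · rfl
    intro a b ha hb hv
    have := hx.1.1.2.2 (Fin.castSucc a) (Fin.castSucc b) (by simpa) (by simpa)
      (by rw [← hverts a ha, ← hverts b hb]; exact hv)
    exact Fin.castSucc_injective _ this

lemma lem_sp (hj' : m.succAbove j' = j) (C : Fin (ℓ+1) → G.Subgraph)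
    (hx : (covP F m.1 C ∧ (C m).verts = (C j).verts) ∧ Nonempty ((C j ⊔ C m).coe ≃g W)) :
    C j ⊔ C m = mergeC j m C j' ∧ (C j).verts = (C m).verts ∧
      Nonempty (F j ≃g (C j).coe) ∧ Nonempty (F m ≃g (C m).coe) :=
  ⟨(mergeC_at_j' hj' C).symm, hx.1.2.symm, hx.1.1.1 j, hx.1.1.1 m⟩

lemma lem_invFun (hj' : m.succAbove j' = j) (D : Fin ℓ → G.Subgraph)
    (hD : covP (mergedF F j m W) m.1 D) (A B : G.Subgraph)
    (hAB : A ⊔ B = D j' ∧ A.verts = B.verts ∧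
      Nonempty (F j ≃g A.coe) ∧ Nonempty (F m ≃g B.coe)) :
    (covP F m.1 (unmergeC m j' D A B) ∧
      ((unmergeC m j' D A B) m).verts = ((unmergeC m j' D A B) j).verts) ∧
      Nonempty (((unmergeC m j' D A B) j ⊔ (unmergeC m j' D A B) m).coe ≃g W) := by
  set C := unmergeC m j' D A B with hC
  have hCm : C m = B := unmergeC_at_m m j' D A B
  have hCj : C j = A := by rw [hC, ← hj', unmergeC_succAbove, if_pos rfl]
  have hCo : ∀ i : Fin ℓ, i ≠ j' → C (m.succAbove i) = D i := by
    intro i hi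
    rw [hC, unmergeC_succAbove, if_neg hi]
  have hAD : A.verts = (D j').verts := verts_eq_of_sup hAB.1 hAB.2.1
  have hDj : C j ⊔ C m = D j' := by rw [hCj, hCm, hAB.1]
  have hWiso : Nonempty (W ≃g (D j').coe) := by
    have := hD.1 j'
    simpa [mergedF, hj'] using this
  refine ⟨⟨⟨?_, ?_, ?_⟩, ?_⟩, ?_⟩
  · intro a
    rcases eq_or_ne a m with rfl | ham
    · rw [hCm]; exact hAB.2.2.2
    · obtain ⟨i, rfl⟩ := Fin.exists_succAbove_eq ham
      by_cases hij : i = j'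
      · subst hij
        rw [hj', hCj]
        exact hAB.2.2.1
      · have h2 : m.succAbove i ≠ j := by
          intro h
          exact hij (Fin.succAbove_right_injective (h.trans hj'.symm))
        have h3 : Nonempty (F (m.succAbove i) ≃g (D i).coe) := by
          have := hD.1 i
          simpa [mergedF, h2] using this
        exact ⟨h3.some.trans (isoOfSubgraphEq (hCo i hij).symm)⟩
  · rw [eq_top_iff, ← hD.2.1]
    apply iSup_le
    intro i
    by_cases hij : i = j'
    · subst hij
      rw [← hDj]
      exact sup_le (le_iSup _ j) (le_iSup _ m)
    · rw [← hCo i hij]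
      exact le_iSup _ _
  · have hmle : m.1 ≤ ℓ := Nat.lt_succ_iff.mp m.isLt
    have hverts2 : ∀ i : Fin ℓ, (i : ℕ) < m.1 →
        (C (m.succAbove i)).verts = (D i).verts := by
      intro i hi
      by_cases hij : i = j'
      · subst hij
        rw [hj', hCj]
        exact hAD
      · rw [hCo i hij]
    have hcsa : ∀ a : Fin (ℓ+1), ∀ ha : (a : ℕ) < m.1,
        m.succAbove ⟨a.1, lt_of_lt_of_le ha hmle⟩ = a := by
      intro a ha
      rw [Fin.succAbove_of_castSucc_lt _ _ (by rw [Fin.lt_def]; exact ha)]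
      exact Fin.ext rfl
    intro a b ha hb hv
    have ha' := hverts2 ⟨a.1, lt_of_lt_of_le ha hmle⟩ ha
    have hb' := hverts2 ⟨b.1, lt_of_lt_of_le hb hmle⟩ hb
    rw [hcsa a ha] at ha'
    rw [hcsa b hb] at hb'
    have := hD.2.2 ⟨a.1, lt_of_lt_of_le ha hmle⟩ ⟨b.1, lt_of_lt_of_le hb hmle⟩ ha hb
      (by rw [← ha', ← hb']; exact hv)
    exact Fin.ext (Fin.mk_eq_mk.mp this)
  · rw [hCm, hCj]; exact hAB.2.1.symm
  · rw [hDj]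
    exact ⟨hWiso.some.symm⟩

noncomputable def bigEquiv (hj' : m.succAbove j' = j) (G : SimpleGraph (Fin n)) :
    colSetW F j m W G ≃
      Σ D : coversAux (mergedF F j m W) m.1 G, spSet (D.1 j') (F j) (F m) where
  toFun x := ⟨⟨mergeC j m x.1, lem_toFun F W hj' x.1 x.2⟩,
    ⟨(x.1 j, x.1 m), lem_sp F W hj' x.1 x.2⟩⟩
  invFun y := ⟨unmergeC m j' y.1.1 y.2.1.1 y.2.1.2,
    lem_invFun F W hj' y.1.1 y.1.2 y.2.1.1 y.2.1.2 y.2.2⟩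
  left_inv := by
    rintro ⟨C, hx⟩
    apply Subtype.ext
    funext a
    show unmergeC m j' (mergeC j m C) (C j) (C m) a = C a
    rcases eq_or_ne a m with rfl | ham
    · exact unmergeC_at_m _ _ _ _ _
    · obtain ⟨i, rfl⟩ := Fin.exists_succAbove_eq ham
      rw [unmergeC_succAbove]
      split_ifs with h
      · subst h; rw [hj']
      · have h' : m.succAbove i ≠ j := by
          intro hc
          exact h (Fin.succAbove_right_injective (hc.trans hj'.symm))
        simp [mergeC, h']
  right_inv := by
    rintro ⟨⟨D, hD⟩, ⟨⟨A, B⟩, hp⟩⟩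
    have hCm : unmergeC m j' D A B m = B := unmergeC_at_m m j' D A B
    have hCj : unmergeC m j' D A B j = A := by
      rw [← hj', unmergeC_succAbove, if_pos rfl]
    have hDeq : mergeC j m (unmergeC m j' D A B) = D := by
      funext i
      by_cases hij : m.succAbove i = j
      · have hi : i = j' := Fin.succAbove_right_injective (hij.trans hj'.symm)
        subst hi
        show (if m.succAbove i = j then _ ⊔ _ else _) = D i
        rw [if_pos hij, hCj, hCm, hp.1]
      · show (if m.succAbove i = j then _ ⊔ _ else _) = D i
        rw [if_neg hij]
        have hij' : i ≠ j' := by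
          intro hc
          exact hij (by rw [hc, hj'])
        rw [unmergeC_succAbove, if_neg hij']
    refine Sigma.ext (Subtype.ext hDeq) ?_
    refine (Subtype.heq_iff_coe_eq ?_).mpr (Prod.ext hCj hCm)
    intro p
    dsimp only
    rw [hDeq]

lemma lemma3 (hj' : m.succAbove j' = j) (G : SimpleGraph (Fin n)) :
    Nat.card (colSetW F j m W G) =
      Nat.card (spSet (⊤ : W.Subgraph) (F j) (F m)) * cAux (mergedF F j m W) m.1 G := by
  classical
  letI : Fintype (coversAux (mergedF F j m W) m.1 G) := Fintype.ofFinite _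
  rw [Nat.card_congr (bigEquiv F W hj' G), nat_card_sigma]
  have hfib : ∀ D : coversAux (mergedF F j m W) m.1 G,
      Nat.card (spSet (D.1 j') (F j) (F m)) =
        Nat.card (spSet (⊤ : W.Subgraph) (F j) (F m)) := by
    intro D
    have hWiso : Nonempty (W ≃g (D.1 j').coe) := by
      have := D.2.1 j'
      simpa [mergedF, hj'] using this
    exact card_spSet (D.1 j') hWiso.some.symm (F j) (F m)
  rw [Finset.sum_congr rfl fun D _ => hfib D, Finset.sum_const, smul_eq_mul, mul_comm]
  congr 1
  simp [cAux, Nat.card_eq_fintype_card]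

end Big

section Assemble

noncomputable def covFunR (n : ℕ) (L' : GSeq) : SimpleGraph (Fin n) → ℝ :=
  fun G => (coverCount L' G : ℝ)

def validL (k : ℕ) : Set GSeq := {L' | ∀ X ∈ L', X.1 = k}

noncomputable def MM (n k : ℕ) : Submodule ℝ (SimpleGraph (Fin n) → ℝ) :=
  Submodule.span ℝ (covFunR n '' validL k)

def toL {k ℓ : ℕ} (F : Fin ℓ → SimpleGraph (Fin k)) : GSeq :=
  List.ofFn (fun i => ⟨k, F i⟩)

lemma toL_mem_valid {k ℓ : ℕ} (F : Fin ℓ → SimpleGraph (Fin k)) : toL F ∈ validL k := by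
  intro X hX
  rw [toL, List.mem_ofFn] at hX
  obtain ⟨i, hi⟩ := hX
  rw [← hi]

lemma coverCount_toL {n k ℓ : ℕ} (F : Fin ℓ → SimpleGraph (Fin k)) (G : SimpleGraph (Fin n)) :
    coverCount (toL F) G = cAux F 0 G := by
  apply Nat.card_congr
  have hlen : (toL F).length = ℓ := by simp [toL]
  refine Equiv.subtypeEquiv (Equiv.arrowCongr (finCongr hlen) (Equiv.refl G.Subgraph)) ?_
  intro C
  have hgs : ∀ i : Fin (toL F).length, (toL F).get i = ⟨k, F (Fin.cast hlen i)⟩ := by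
    intro i
    simp only [toL]
    exact List.get_ofFn _ _
  constructor
  · rintro ⟨hbase, htop⟩
    refine ⟨?_, ?_, ?_⟩
    · intro i'
      have hb := hbase (Fin.cast hlen.symm i')
      rw [hgs] at hb
      exact hb
    · show (⨆ i', C ((finCongr hlen).symm i')) = ⊤
      rw [Equiv.iSup_comp (g := C) (finCongr hlen).symm]
      exact htop
    · intro a b ha
      exact absurd ha (Nat.not_lt_zero _)
  · rintro ⟨hbase, htop, _⟩
    constructor
    · intro i
      rw [hgs i]
      exact hbase (Fin.cast hlen i)
    · have h2 : (⨆ i', C ((finCongr hlen).symm i')) = ⊤ := htop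
      rw [Equiv.iSup_comp (g := C) (finCongr hlen).symm] at h2
      exact h2

def castGraph {a b : ℕ} (h : a = b) (X : SimpleGraph (Fin a)) : SimpleGraph (Fin b) := h ▸ X

lemma castGraph_iso {a b : ℕ} (h : a = b) (X : SimpleGraph (Fin a)) :
    Nonempty (X ≃g castGraph h X) := by
  subst h
  exact ⟨RelIso.refl _⟩

noncomputable def ofL {k : ℕ} (L : GSeq) (hL : ∀ X ∈ L, X.1 = k) :
    Fin L.length → SimpleGraph (Fin k) :=
  fun i => castGraph (hL _ (L.get_mem i)) (L.get i).2

lemma coverCountNO_eq_cAux {n k : ℕ} (L : GSeq) (hL : ∀ X ∈ L, X.1 = k)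
    (G : SimpleGraph (Fin n)) :
    coverCountNO L G = cAux (ofL L hL) L.length G := by
  apply Nat.card_congr
  apply Equiv.subtypeEquivRight
  intro C
  have hbase : (∀ i, Nonempty ((L.get i).2 ≃g (C i).coe)) ↔
      (∀ i, Nonempty (ofL L hL i ≃g (C i).coe)) := by
    constructor
    · intro h i
      exact ⟨(castGraph_iso (hL _ (L.get_mem i)) (L.get i).2).some.symm.trans (h i).some⟩
    · intro h i
      exact ⟨(castGraph_iso (hL _ (L.get_mem i)) (L.get i).2).some.trans (h i).some⟩
  constructor
  · rintro ⟨h1, h2, h3⟩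
    exact ⟨hbase.mp h1, h2, fun a b _ _ hv => h3 hv⟩
  · rintro ⟨h1, h2, h3⟩
    exact ⟨hbase.mpr h1, h2, fun a b hv => h3 a b a.isLt b.isLt hv⟩

lemma cAux_stabilize {n k ℓ : ℕ} (F : Fin ℓ → SimpleGraph (Fin k)) (m : ℕ) (hm : ℓ ≤ m)
    (G : SimpleGraph (Fin n)) : cAux F (m + 1) G = cAux F m G := by
  apply Nat.card_congr
  apply Equiv.subtypeEquivRight
  intro C
  constructor
  · rintro ⟨h1, h2, h3⟩
    exact ⟨h1, h2, fun a b ha hb hv => h3 a b (Nat.lt_succ_of_lt ha) (Nat.lt_succ_of_lt hb) hv⟩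
  · rintro ⟨h1, h2, h3⟩
    exact ⟨h1, h2, fun a b _ _ hv => h3 a b (lt_of_lt_of_le a.isLt hm) (lt_of_lt_of_le b.isLt hm) hv⟩

lemma main_induction (n k : ℕ) : ∀ ℓ : ℕ, ∀ F : Fin ℓ → SimpleGraph (Fin k), ∀ m : ℕ,
    (fun G : SimpleGraph (Fin n) => (cAux F m G : ℝ)) ∈ MM n k := by
  intro ℓ
  induction ℓ using Nat.strong_induction_on with
  | _ ℓ IH =>
    intro F m
    induction m with
    | zero =>
      apply Submodule.subset_span
      refine ⟨toL F, toL_mem_valid F, ?_⟩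
      funext G
      rw [covFunR, coverCount_toL]
    | succ m IHm =>
      by_cases hm : m < ℓ
      · rcases ℓ with _ | ℓ'
        · omega
        · -- key identity
          have hfun : (fun G : SimpleGraph (Fin n) => (cAux F (m + 1) G : ℝ)) =
              (fun G : SimpleGraph (Fin n) => (cAux F m G : ℝ)) -
              ∑ j : Fin (ℓ' + 1), ∑ W : SimpleGraph (Fin k),
                (if (j : ℕ) < m then
                  ((Nat.card (spSet (⊤ : W.Subgraph) (F j) (F ⟨m, hm⟩)) : ℝ) / csCl W)
                 else 0) •
                (fun G : SimpleGraph (Fin n) => (cAux (mergedF F j ⟨m, hm⟩ W) m G : ℝ)) := by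
            funext G
            have h1 := lemma1 F G ⟨m, hm⟩
            have h1R : (cAux F m G : ℝ) = (cAux F (m + 1) G : ℝ) +
                ∑ j : Fin (ℓ' + 1), if (j : ℕ) < m then
                  (Nat.card (colSet F j ⟨m, hm⟩ G) : ℝ) else 0 := by
              rw [h1]
              push_cast [apply_ite (Nat.cast : ℕ → ℝ)]
              norm_num
            have hcol : ∀ j : Fin (ℓ' + 1), (j : ℕ) < m →
                (Nat.card (colSet F j ⟨m, hm⟩ G) : ℝ) =
                  ∑ W : SimpleGraph (Fin k),
                    ((Nat.card (spSet (⊤ : W.Subgraph) (F j) (F ⟨m, hm⟩)) : ℝ) / csCl W) *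
                      (cAux (mergedF F j ⟨m, hm⟩ W) m G : ℝ) := by
              intro j hj
              have hne : j ≠ (⟨m, hm⟩ : Fin (ℓ' + 1)) := by
                intro h
                rw [h] at hj
                exact Nat.lt_irrefl m hj
              obtain ⟨j', hj'⟩ := Fin.exists_succAbove_eq hne
              rw [lemma2 F G j ⟨m, hm⟩]
              refine Finset.sum_congr rfl fun W _ => ?_
              rw [lemma3 F W hj' G]
              push_cast
              ring
            have hTS : (∑ j : Fin (ℓ' + 1), if (j : ℕ) < m then
                  (Nat.card (colSet F j ⟨m, hm⟩ G) : ℝ) else 0) =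
                ∑ j : Fin (ℓ' + 1), ∑ W : SimpleGraph (Fin k),
                  (if (j : ℕ) < m then
                    ((Nat.card (spSet (⊤ : W.Subgraph) (F j) (F ⟨m, hm⟩)) : ℝ) / csCl W)
                   else 0) * (cAux (mergedF F j ⟨m, hm⟩ W) m G : ℝ) := by
              refine Finset.sum_congr rfl fun j _ => ?_
              by_cases hj : (j : ℕ) < m
              · rw [if_pos hj, hcol j hj]
                exact Finset.sum_congr rfl fun W _ => by rw [if_pos hj]
              · rw [if_neg hj]
                symm
                refine Finset.sum_eq_zero fun W _ => ?_
                rw [if_neg hj, zero_mul]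
            simp only [Pi.sub_apply, Finset.sum_apply, Pi.smul_apply, smul_eq_mul]
            rw [eq_sub_iff_add_eq, ← hTS]
            linarith [h1R]
          rw [hfun]
          refine Submodule.sub_mem _ IHm (Submodule.sum_mem _ fun j _ =>
            Submodule.sum_mem _ fun W _ => Submodule.smul_mem _ _ ?_)
          exact IH ℓ' (Nat.lt_succ_self ℓ') (mergedF F j ⟨m, hm⟩ W) m
      · have heq : (fun G : SimpleGraph (Fin n) => (cAux F (m + 1) G : ℝ)) =
            (fun G : SimpleGraph (Fin n) => (cAux F m G : ℝ)) := by
          funext G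
          rw [cAux_stabilize F m (Nat.le_of_not_lt hm) G]
        rw [heq]
        exact IHm
end Assemble

/-- Let `n ≥ 2` and let `L = (F_1, …, F_ℓ)` be a sequence of graphs, each with
exactly `n − 1` vertices. Then there are a finite set `S` of sequences of graphs
on exactly `n − 1` vertices and real coefficients `β` such that for every
`n`-vertex graph `G`, `c*(L, G) = Σ_{L' ∈ S} β(L') · c(L', G)`: the
non-overlapping covering number is a fixed real linear combination of ordinary
covering numbers. -/
theorem stmt_16 {n : ℕ} (hn : 2 ≤ n) (L : GSeq) (hL : ∀ F ∈ L, F.1 = n - 1) :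
    ∃ (S : Finset GSeq) (β : GSeq → ℝ),
      (∀ L' ∈ S, ∀ F ∈ L', F.1 = n - 1) ∧
      ∀ G : SimpleGraph (Fin n),
        (coverCountNO L G : ℝ) = ∑ L' ∈ S, β L' * coverCount L' G := by
  classical
  have hmem := main_induction n (n - 1) L.length (ofL L hL) L.length
  rw [MM, Finsupp.mem_span_image_iff_linearCombination] at hmem
  obtain ⟨l, hl, hrepr⟩ := hmem
  refine ⟨l.support, l, ?_, ?_⟩
  · intro L' hL' X hX
    exact (Finsupp.mem_supported ℝ l).mp hl hL' X hX
  · intro G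
    rw [coverCountNO_eq_cAux L hL G]
    rw [Finsupp.linearCombination_apply] at hrepr
    have h2 := congrFun hrepr G
    rw [← h2, Finsupp.sum, Finset.sum_apply]
    refine Finset.sum_congr rfl fun L' _ => ?_
    simp [covFunR]
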